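/- Let 0 ≤ a < b be real numbers and let φ : ℝ → ℝ be measurable with φ(0) = 0, and suppose there exists C ≥ 0 such that |φ(u)| ≤ C·|u| for all u ∈ ℝ. Then the following are equivalent: (i) for all τ ∈ ℝ and all signals x in L²[0,∞), writing y(t) := φ(x(t)), ∫₀^∞ (x − b⁻¹y)(t+τ)·(−a·x + y)(t) dt ≤ ∫₀^∞ (x − b⁻¹y)(t)·(−a·x + y)(t) dt; (ii) φ is slope-restricted in [a,b], i.e. for all x₁, x₂ ∈ ℝ with x₁ ≠ x₂, a ≤ (φ(x₁) − φ(x₂))/(x₁ − x₂) ≤ b. -/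

import Mathlib

open MeasureTheory Set

/-- A signal in L²[0,∞): square integrable over ℝ and vanishing on (−∞,0). -/
def IsSignal (x : ℝ → ℝ) : Prop :=
  MemLp x 2 volume ∧ ∀ t < (0:ℝ), x t = 0

open intervalIntegral

lemma young_le (L : ℝ) (hL : 0 < L) (h : ℝ → ℝ) (hcont : Continuous h)
    (hmono : Monotone h) (hlip : ∀ x y : ℝ, x ≤ y → h y - h x ≤ L * (y - x))
    (u v : ℝ) (huv : v ≤ u) :
    (h u - h v)^2 ≤ 2 * L * (∫ s in v..u, (h u - h s)) := by
  set δ := h u - h v with hδ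
  have hδ0 : 0 ≤ δ := sub_nonneg.2 (hmono huv)
  have hδle : δ ≤ L * (u - v) := hlip v u huv
  set c := v + δ / L with hc
  have hvc : v ≤ c := by
    have : 0 ≤ δ / L := div_nonneg hδ0 hL.le
    simp only [hc]; linarith
  have hcu : c ≤ u := by
    have : δ / L ≤ u - v := (div_le_iff₀' hL).2 (by linarith)
    simp only [hc]; linarith
  have hint : ∀ p q : ℝ, IntervalIntegrable (fun s => h u - h s) volume p q :=
    fun p q => (continuous_const.sub hcont).intervalIntegrable p q
  have hsplit : (∫ s in v..c, (h u - h s)) + (∫ s in c..u, (h u - h s)) =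
      ∫ s in v..u, (h u - h s) := integral_add_adjacent_intervals (hint v c) (hint c u)
  have h2 : 0 ≤ ∫ s in c..u, (h u - h s) := by
    apply intervalIntegral.integral_nonneg hcu
    intro s hs
    exact sub_nonneg.2 (hmono hs.2)
  have h3 : (∫ s in v..c, (δ - L * (s - v))) ≤ ∫ s in v..c, (h u - h s) := by
    apply intervalIntegral.integral_mono_on hvc
    · exact ((continuous_const.sub ((continuous_const.mul (continuous_id.sub continuous_const))) ).intervalIntegrable v c)
    · exact hint v c
    · intro s hs
      have := hlip v s hs.1
      simp only [hδ]; linarith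
  have h4 : (∫ s in v..c, (δ - L * (s - v))) = δ^2 / (2*L) := by
    have : (∫ s in v..c, (δ - L * (s - v))) = (∫ s in v..c, ((δ + L*v) - L * s)) := by
      congr 1; ext s; ring
    rw [this, intervalIntegral.integral_sub (g := fun s : ℝ => L * s) (continuous_const.intervalIntegrable v c) ((continuous_const.mul continuous_id').intervalIntegrable v c)]
    rw [intervalIntegral.integral_const, intervalIntegral.integral_const_mul, integral_id]
    have hLne : L ≠ 0 := hL.ne'
    rw [hc]; field_simp
    linear_combination (2*δ^2 + 2*L*δ*v) * mul_inv_cancel₀ hLne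
  have : δ^2/(2*L) ≤ ∫ s in v..u, (h u - h s) := by
    rw [← hsplit]; linarith
  calc (h u - h v)^2 = 2*L * (δ^2/(2*L)) := by field_simp; rfl
    _ ≤ 2*L*(∫ s in v..u, (h u - h s)) := by
        apply mul_le_mul_of_nonneg_left this (by positivity)

lemma young_ge (L : ℝ) (hL : 0 < L) (h : ℝ → ℝ) (hcont : Continuous h)
    (hmono : Monotone h) (hlip : ∀ x y : ℝ, x ≤ y → h y - h x ≤ L * (y - x))
    (u v : ℝ) (huv : u ≤ v) :
    (h u - h v)^2 ≤ 2 * L * (∫ s in u..v, (h s - h u)) := by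
  set δ := h v - h u with hδ
  have hδ0 : 0 ≤ δ := sub_nonneg.2 (hmono huv)
  have hδle : δ ≤ L * (v - u) := hlip u v huv
  set c := v - δ / L with hc
  have hcv : c ≤ v := by
    have : 0 ≤ δ / L := div_nonneg hδ0 hL.le
    simp only [hc]; linarith
  have huc : u ≤ c := by
    have : δ / L ≤ v - u := (div_le_iff₀' hL).2 (by linarith)
    simp only [hc]; linarith
  have hint : ∀ p q : ℝ, IntervalIntegrable (fun s => h s - h u) volume p q :=
    fun p q => (hcont.sub continuous_const).intervalIntegrable p q
  have hsplit : (∫ s in u..c, (h s - h u)) + (∫ s in c..v, (h s - h u)) =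
      ∫ s in u..v, (h s - h u) := integral_add_adjacent_intervals (hint u c) (hint c v)
  have h2 : 0 ≤ ∫ s in u..c, (h s - h u) := by
    apply intervalIntegral.integral_nonneg huc
    intro s hs
    exact sub_nonneg.2 (hmono hs.1)
  have h3 : (∫ s in c..v, (δ - L * (v - s))) ≤ ∫ s in c..v, (h s - h u) := by
    apply intervalIntegral.integral_mono_on hcv
    · exact ((continuous_const.sub ((continuous_const.mul (continuous_const.sub continuous_id'))) ).intervalIntegrable c v)
    · exact hint c v
    · intro s hs
      have := hlip s v hs.2
      simp only [hδ]; linarith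
  have h4 : (∫ s in c..v, (δ - L * (v - s))) = δ^2 / (2*L) := by
    have : (∫ s in c..v, (δ - L * (v - s))) = (∫ s in c..v, ((δ - L*v) + L * s)) := by
      congr 1; ext s; ring
    rw [this, intervalIntegral.integral_add (g := fun s : ℝ => L * s) (continuous_const.intervalIntegrable c v) ((continuous_const.mul continuous_id').intervalIntegrable c v)]
    rw [intervalIntegral.integral_const, intervalIntegral.integral_const_mul, integral_id]
    have hLne : L ≠ 0 := hL.ne'
    rw [hc]; field_simp
    linear_combination (2*δ^2 - 2*L*δ*v) * mul_inv_cancel₀ hLne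
  have h5 : δ^2/(2*L) ≤ ∫ s in u..v, (h s - h u) := by
    rw [← hsplit]; linarith
  calc (h u - h v)^2 = 2*L * (δ^2/(2*L)) := by field_simp; ring
    _ ≤ 2*L*(∫ s in u..v, (h s - h u)) := mul_le_mul_of_nonneg_left h5 (by positivity)

lemma young (L : ℝ) (hL : 0 < L) (h : ℝ → ℝ) (hcont : Continuous h)
    (hmono : Monotone h) (hlip : ∀ x y : ℝ, x ≤ y → h y - h x ≤ L * (y - x))
    (u v : ℝ) :
    (h u - h v)^2 ≤ 2 * L * (∫ s in v..u, (h u - h s)) := by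
  rcases le_total v u with huv | huv
  · exact young_le L hL h hcont hmono hlip u v huv
  · have := young_ge L hL h hcont hmono hlip u v huv
    have heq : (∫ s in v..u, (h u - h s)) = ∫ s in u..v, (h s - h u) := by
      rw [intervalIntegral.integral_symm]
      rw [← intervalIntegral.integral_neg]
      congr 1; ext s; ring
    rw [heq]; exact this

lemma pointwise_young (a b : ℝ) (ha : 0 ≤ a) (hab : a < b)
    (h : ℝ → ℝ) (hcont : Continuous h) (hmono : Monotone h) (h0 : h 0 = 0)
    (hlip : ∀ x y : ℝ, x ≤ y → b * (h y - h x) ≤ (b - a) * (y - x)) (u v : ℝ) :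
    h u * ((b-a)*v - b * h v) ≤
      ((b-a)*(u * h u - ∫ s in (0:ℝ)..u, h s) - b/2 * (h u)^2)
      + ((b-a)*(∫ s in (0:ℝ)..v, h s) - b/2 * (h v)^2) := by
  have hb : 0 < b := lt_of_le_of_lt ha hab
  set L := (b - a)/b with hL
  have hLpos : 0 < L := div_pos (by linarith) hb
  have hlip' : ∀ x y : ℝ, x ≤ y → h y - h x ≤ L * (y - x) := by
    intro x y hxy
    have := hlip x y hxy
    rw [hL]
    rw [div_mul_eq_mul_div, le_div_iff₀ hb]
    linarith
  have hy := young L hLpos h hcont hmono hlip' u v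
  have hsplit : (∫ s in (0:ℝ)..v, h s) + (∫ s in v..u, h s) = ∫ s in (0:ℝ)..u, h s :=
    integral_add_adjacent_intervals (hcont.intervalIntegrable 0 v) (hcont.intervalIntegrable v u)
  have hIc : (∫ s in v..u, (h u - h s)) = (u - v) * h u - ∫ s in v..u, h s := by
    rw [intervalIntegral.integral_sub (continuous_const.intervalIntegrable v u)
      (hcont.intervalIntegrable v u), intervalIntegral.integral_const, smul_eq_mul]
  rw [hIc] at hy
  have h2 : b/2 * (h u - h v)^2 ≤ (b-a) * ((u - v) * h u - ∫ s in v..u, h s) := by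
    have := mul_le_mul_of_nonneg_left hy (le_of_lt (half_pos hb))
    calc b/2 * (h u - h v)^2 ≤ b/2 * (2 * L * ((u - v) * h u - ∫ s in v..u, h s)) := this
      _ = (b-a) * ((u - v) * h u - ∫ s in v..u, h s) := by
          rw [hL]; field_simp
  have hsplit' : (∫ s in v..u, h s) = (∫ s in (0:ℝ)..u, h s) - (∫ s in (0:ℝ)..v, h s) := by
    linarith
  rw [hsplit'] at h2
  nlinarith [h2]


lemma shift_setIntegral (F : ℝ → ℝ) (τ : ℝ) :
    ∫ t in Ici (0:ℝ), F (t + τ) = ∫ s in Ici τ, F s := by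
  have h1 : ∫ t in Ici (0:ℝ), F (t + τ) = ∫ t, (Ici τ).indicator F (t + τ) := by
    rw [← MeasureTheory.integral_indicator measurableSet_Ici]
    congr 1
    ext t
    by_cases ht : (0:ℝ) ≤ t
    · rw [indicator_of_mem (by exact ht) , indicator_of_mem (by simpa using ht)]
    · rw [indicator_of_notMem (by exact ht), indicator_of_notMem (by simpa using ht)]
  rw [h1, integral_add_right_eq_self ((Ici τ).indicator F) τ,
    MeasureTheory.integral_indicator measurableSet_Ici]

lemma tail_le (F : ℝ → ℝ) (τ : ℝ) (hF0 : ∀ s < (0:ℝ), F s = 0) (hFnn : ∀ s, 0 ≤ F s)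
    (hFi : IntegrableOn F (Ici (0:ℝ)) volume) :
    ∫ s in Ici τ, F s ≤ ∫ s in Ici (0:ℝ), F s := by
  rcases le_or_gt 0 τ with hτ | hτ
  · exact setIntegral_mono_set hFi (Filter.Eventually.of_forall fun s => hFnn s)
      (HasSubset.Subset.eventuallyLE (Ici_subset_Ici.2 hτ))
  · have hunion : Ici τ = Ico τ 0 ∪ Ici (0:ℝ) := by
      rw [Ico_union_Ici_eq_Ici hτ.le]
    have hdisj : Disjoint (Ico τ (0:ℝ)) (Ici (0:ℝ)) := by
      apply disjoint_left.2
      intro s hs hs'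
      exact absurd (mem_Ici.1 hs') (not_le.2 hs.2)
    have hzero : IntegrableOn F (Ico τ 0) volume := by
      apply (integrableOn_congr_fun (fun s hs => (hF0 s hs.2).symm) measurableSet_Ico).1
      exact integrableOn_zero
    rw [hunion, setIntegral_union hdisj measurableSet_Ici hzero hFi,
      setIntegral_eq_zero_of_forall_eq_zero fun s hs => hF0 s hs.2, zero_add]


lemma integral_floor_step (c : ℤ → ℝ) (m : ℕ)
    (hc0 : ∀ j : ℤ, j < 0 → c j = 0) (hcm : ∀ j : ℤ, (m:ℤ) ≤ j → c j = 0) :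
    ∫ t in Ici (0:ℝ), c ⌊t⌋ = ∑ j ∈ Finset.range m, c (j:ℤ) := by
  have hiff : ∀ (j : ℕ) (t : ℝ), t ∈ Ico ((j:ℝ)) ((j:ℝ)+1) ↔ ⌊t⌋ = (j:ℤ) := by
    intro j t
    rw [mem_Ico, Int.floor_eq_iff]
    push_cast
    tauto
  have hfun : ∀ t : ℝ, c ⌊t⌋ =
      ∑ j ∈ Finset.range m, (Ico ((j:ℝ)) ((j:ℝ)+1)).indicator (fun _ => c (j:ℤ)) t := by
    intro t
    have : ∀ j ∈ Finset.range m,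
        (Ico ((j:ℝ)) ((j:ℝ)+1)).indicator (fun _ => c (j:ℤ)) t
          = if (j:ℤ) = ⌊t⌋ then c (j:ℤ) else 0 := by
      intro j _
      by_cases hj : ⌊t⌋ = (j:ℤ)
      · rw [indicator_of_mem ((hiff j t).2 hj), if_pos hj.symm]
      · rw [indicator_of_notMem (fun hmem => hj ((hiff j t).1 hmem)),
          if_neg (fun hh => hj hh.symm)]
    rw [Finset.sum_congr rfl this]
    rcases lt_or_ge ⌊t⌋ 0 with hneg | hnn
    · rw [hc0 _ hneg, Finset.sum_eq_zero]
      intro j hj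
      rw [if_neg]
      intro hh
      omega
    · rcases lt_or_ge ⌊t⌋ (m:ℤ) with hlt | hge
      · set j0 : ℕ := ⌊t⌋.toNat with hj0
        have hj0' : (j0:ℤ) = ⌊t⌋ := Int.toNat_of_nonneg hnn
        have hj0m : j0 ∈ Finset.range m := by
          rw [Finset.mem_range]; omega
        rw [Finset.sum_eq_single j0]
        · rw [if_pos hj0', hj0']
        · intro j hjm hjne
          rw [if_neg]
          intro hh
          apply hjne
          omega
        · intro hab
          exact absurd hj0m hab
      · rw [hcm _ hge, Finset.sum_eq_zero]
        intro j hj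
        rw [Finset.mem_range] at hj
        rw [if_neg]
        intro hh
        omega
  rw [setIntegral_congr_fun measurableSet_Ici (fun t _ => hfun t)]
  rw [MeasureTheory.integral_finset_sum]
  · apply Finset.sum_congr rfl
    intro j _
    rw [setIntegral_indicator measurableSet_Ico]
    have : Ici (0:ℝ) ∩ Ico ((j:ℝ)) ((j:ℝ)+1) = Ico ((j:ℝ)) ((j:ℝ)+1) := by
      apply inter_eq_self_of_subset_right
      intro s hs
      exact le_trans (by exact_mod_cast Nat.zero_le j) hs.1
    rw [this, setIntegral_const, Real.volume_real_Ico]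
    simp
  · intro j _
    apply Integrable.integrableOn
    rw [integrable_indicator_iff measurableSet_Ico]
    exact integrableOn_const (by rw [Real.volume_Ico]; exact ENNReal.ofReal_ne_top)

lemma sum_alt_odd (A B : ℝ) (n : ℕ) :
    ∑ j ∈ Finset.range (2*n+1), (if Even j then A else B) = (n+1) * A + n * B := by
  induction n with
  | zero => simp
  | succ n ih =>
    have h1 : 2*(n+1)+1 = (2*n+1) + 1 + 1 := by ring
    rw [h1, Finset.sum_range_succ, Finset.sum_range_succ, ih]
    have he : ¬ Even (2*n+1) := by simp [parity_simps]
    have he2 : Even (2*n+1+1) := by simp [parity_simps]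
    rw [if_neg he, if_pos he2]
    push_cast
    ring

lemma sum_alt_even (A B : ℝ) (n : ℕ) :
    ∑ j ∈ Finset.range (2*n), (if Even j then A else B) = n * A + n * B := by
  induction n with
  | zero => simp
  | succ n ih =>
    have h1 : 2*(n+1) = (2*n) + 1 + 1 := by ring
    rw [h1, Finset.sum_range_succ, Finset.sum_range_succ, ih]
    have he : Even (2*n) := by simp [parity_simps]
    have he2 : ¬ Even (2*n+1) := by simp [parity_simps]
    rw [if_neg he2, if_pos he]
    push_cast
    ring

lemma reverse_dir (a b : ℝ) (ha : 0 ≤ a) (hab : a < b) (φ : ℝ → ℝ) (hφ0 : φ 0 = 0)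
    (hyp : ∀ (τ : ℝ) (x : ℝ → ℝ), IsSignal x →
      ∫ t in Ici (0:ℝ), (x (t + τ) - b⁻¹ * φ (x (t + τ))) * (-a * x t + φ (x t))
        ≤ ∫ t in Ici (0:ℝ), (x t - b⁻¹ * φ (x t)) * (-a * x t + φ (x t)))
    (u v : ℝ) (hne : u ≠ v) :
    a ≤ (φ u - φ v) / (u - v) ∧ (φ u - φ v) / (u - v) ≤ b := by
  have hb : 0 < b := lt_of_le_of_lt ha hab
  set P : ℝ := u - b⁻¹ * φ u with hP
  set Q : ℝ := -a * u + φ u with hQ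
  set R : ℝ := v - b⁻¹ * φ v with hR
  set S : ℝ := -a * v + φ v with hS
  have keyn : ∀ n : ℕ, (n:ℝ)*(R*Q) + (n:ℝ)*(P*S) ≤ ((n:ℝ)+1)*(P*Q) + (n:ℝ)*(R*S) := by
    intro n
    set m : ℕ := 2*n+1 with hm
    set w : ℤ → ℝ := fun j => if 0 ≤ j ∧ j < (m:ℤ) then (if Even j then u else v) else 0
      with hwdef
    set x : ℝ → ℝ := fun t => w ⌊t⌋ with hxdef
    have hw0 : ∀ j : ℤ, j < 0 → w j = 0 := by
      intro j hj; simp only [hwdef]; rw [if_neg]; omega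
    have hwm : ∀ j : ℤ, (m:ℤ) ≤ j → w j = 0 := by
      intro j hj; simp only [hwdef]; rw [if_neg]; omega
    have hxmeas : Measurable x :=
      (Measurable.of_discrete (f := w)).comp Int.measurable_floor
    have hB : ∀ t, |x t| ≤ |u| + |v| := by
      intro t
      simp only [hxdef, hwdef]
      split_ifs
      · linarith [abs_nonneg v]
      · linarith [abs_nonneg u]
      · simp [abs_nonneg u, abs_nonneg v]
        positivity
    have hx0 : ∀ t < (0:ℝ), x t = 0 := by
      intro t ht
      apply hw0
      rw [Int.floor_lt]
      push_cast
      exact ht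
    have hxout : ∀ t : ℝ, t ∉ Icc (0:ℝ) (m:ℝ) → x t = 0 := by
      intro t ht
      rw [mem_Icc, not_and_or] at ht
      rcases ht with ht | ht
      · exact hx0 t (not_le.1 ht)
      · apply hwm
        rw [Int.le_floor]
        exact_mod_cast (not_le.1 ht).le
    have hxsq : Integrable (fun t => (x t)^2) volume := by
      refine Integrable.mono'
        (g := (Icc (0:ℝ) (m:ℝ)).indicator (fun _ => (|u| + |v|)^2)) ?_
        ((hxmeas.pow_const 2).aestronglyMeasurable) ?_
      · rw [integrable_indicator_iff measurableSet_Icc]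
        exact integrableOn_const measure_Icc_lt_top.ne
      · filter_upwards with t
        by_cases ht : t ∈ Icc (0:ℝ) (m:ℝ)
        · rw [indicator_of_mem ht]
          rw [Real.norm_eq_abs, abs_pow]
          exact pow_le_pow_left₀ (abs_nonneg _) (hB t) 2
        · rw [indicator_of_notMem ht, hxout t ht]
          simp
    have hsig : IsSignal x :=
      ⟨(memLp_two_iff_integrable_sq hxmeas.aestronglyMeasurable).2 hxsq, hx0⟩
    have hineq := hyp 1 x hsig
    set cL : ℤ → ℝ := fun j => (w (j+1) - b⁻¹ * φ (w (j+1))) * (-a * w j + φ (w j)) with hcL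
    set cR : ℤ → ℝ := fun j => (w j - b⁻¹ * φ (w j)) * (-a * w j + φ (w j)) with hcR
    have hLzero : ∀ j : ℤ, -a * w j + φ (w j) = 0 → cL j = 0 := by
      intro j hj; simp only [hcL]; rw [hj, mul_zero]
    have hptL : ∀ t : ℝ, (x (t + 1) - b⁻¹ * φ (x (t + 1))) * (-a * x t + φ (x t)) = cL ⌊t⌋ := by
      intro t
      simp only [hcL, hxdef]
      rw [Int.floor_add_one]
    have hL : (∫ t in Ici (0:ℝ), (x (t + 1) - b⁻¹ * φ (x (t + 1))) * (-a * x t + φ (x t)))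
        = ∑ j ∈ Finset.range m, cL (j:ℤ) := by
      rw [setIntegral_congr_fun measurableSet_Ici
        (g := fun t => cL ⌊t⌋) (fun t _ => hptL t)]
      apply integral_floor_step
      · intro j hj
        apply hLzero; rw [hw0 j hj, hφ0]; ring
      · intro j hj
        apply hLzero; rw [hwm j hj, hφ0]; ring
    have hRi : (∫ t in Ici (0:ℝ), (x t - b⁻¹ * φ (x t)) * (-a * x t + φ (x t)))
        = ∑ j ∈ Finset.range m, cR (j:ℤ) := by
      rw [setIntegral_congr_fun measurableSet_Ici
        (g := fun t => cR ⌊t⌋) (fun t _ => rfl)]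
      apply integral_floor_step
      · intro j hj
        simp only [hcR]; rw [hw0 j hj, hφ0]; ring
      · intro j hj
        simp only [hcR]; rw [hwm j hj, hφ0]; ring
    have hwj : ∀ j : ℕ, j < m → w (j:ℤ) = if Even j then u else v := by
      intro j hj
      simp only [hwdef]
      rw [if_pos (by constructor <;> omega)]
      simp [Int.even_coe_nat]
    have hsumR : ∑ j ∈ Finset.range m, cR (j:ℤ) = ((n:ℝ)+1)*(P*Q) + (n:ℝ)*(R*S) := by
      rw [Finset.sum_congr rfl (g := fun j => if Even j then P*Q else R*S) ?_]
      · rw [hm, sum_alt_odd]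
      · intro j hj
        rw [Finset.mem_range] at hj
        simp only [hcR]
        rw [hwj j hj]
        by_cases hev : Even j
        · rw [if_pos hev, if_pos hev, hP, hQ]
        · rw [if_neg hev, if_neg hev, hR, hS]
    have hsumL : ∑ j ∈ Finset.range m, cL (j:ℤ) = (n:ℝ)*(R*Q) + (n:ℝ)*(P*S) := by
      have hmsplit : m = (2*n) + 1 := hm
      rw [hmsplit, Finset.sum_range_succ]
      have hlast : cL ((2*n : ℕ):ℤ) = 0 := by
        have hww : w (((2*n:ℕ):ℤ) + 1) = 0 := by
          apply hwm
          simp only [hm]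
          push_cast
          omega
        simp only [hcL]
        rw [hww, hφ0]
        ring
      rw [hlast, add_zero]
      rw [Finset.sum_congr rfl (g := fun j => if Even j then R*Q else P*S) ?_]
      · rw [sum_alt_even]
      · intro j hj
        rw [Finset.mem_range] at hj
        simp only [hcL]
        have hj1 : j + 1 < m := by omega
        have hcast : ((j:ℤ) + 1) = ((j+1 : ℕ) : ℤ) := by push_cast; ring
        rw [hcast, hwj (j+1) hj1, hwj j (by omega)]
        by_cases hev : Even j
        · rw [if_pos hev, if_neg (by simp [Nat.even_add_one, hev]), if_pos hev, hR, hQ]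
        · rw [if_neg hev, if_pos (by simp [Nat.even_add_one, hev]), if_neg hev, hP, hS]
    rw [hL, hRi, hsumL, hsumR] at hineq
    exact hineq
  -- deduce the quadratic inequality
  have hD : R*Q + P*S - P*Q - R*S ≤ 0 := by
    by_contra hpos
    push_neg at hpos
    obtain ⟨n, hn⟩ := exists_nat_gt ((P*Q) / (R*Q + P*S - P*Q - R*S))
    have h1 := keyn n
    have h2 : (P*Q) / (R*Q + P*S - P*Q - R*S) < (n:ℝ) := hn
    rw [div_lt_iff₀ hpos] at h2
    nlinarith
  have hE : 0 ≤ (P - R) * (Q - S) := by nlinarith [hD]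
  -- translate to slope
  set d : ℝ := u - v with hd
  have hdne : d ≠ 0 := sub_ne_zero.2 hne
  set s : ℝ := (φ u - φ v) / d with hs
  have hsd : φ u - φ v = s * d := by
    rw [hs, div_mul_cancel₀ _ hdne]
  have hPR : P - R = d - b⁻¹ * (s*d) := by
    rw [hP, hR, ← hsd, hd]; ring
  have hQS : Q - S = -a*d + s*d := by
    rw [hQ, hS, ← hsd, hd]; ring
  rw [hPR, hQS] at hE
  have key2 : 0 ≤ (b - s) * (s - a) * d^2 := by
    have hid : (b - s) * (s - a) * d^2 = b * ((d - b⁻¹*(s*d)) * (-a*d + s*d)) := by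
      field_simp
      ring
    rw [hid]
    exact mul_nonneg hb.le hE
  have hd2 : 0 < d^2 := by positivity
  have hba : 0 ≤ (b - s) * (s - a) := by nlinarith
  constructor
  · by_contra hlt
    push_neg at hlt
    nlinarith
  · by_contra hlt
    push_neg at hlt
    nlinarith


noncomputable def Hof (h : ℝ → ℝ) : ℝ → ℝ := fun w => ∫ s in (0:ℝ)..w, h s
noncomputable def Nof (a b : ℝ) (h : ℝ → ℝ) : ℝ → ℝ :=
  fun u => (b-a)*(u * h u - Hof h u) - b/2 * (h u)^2
noncomputable def Mof (a b : ℝ) (h : ℝ → ℝ) : ℝ → ℝ :=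
  fun v => (b-a)*(Hof h v) - b/2 * (h v)^2


lemma pointwise_young' (a b : ℝ) (ha : 0 ≤ a) (hab : a < b)
    (h : ℝ → ℝ) (hcont : Continuous h) (hmono : Monotone h) (h0 : h 0 = 0)
    (hlip : ∀ x y : ℝ, x ≤ y → b * (h y - h x) ≤ (b - a) * (y - x)) (u v : ℝ) :
    h u * ((b-a)*v - b * h v) ≤ Nof a b h u + Mof a b h v :=
  pointwise_young a b ha hab h hcont hmono h0 hlip u v

set_option maxHeartbeats 2000000 in
lemma forward_dir (a b : ℝ) (ha : 0 ≤ a) (hab : a < b) (φ : ℝ → ℝ) (hφ0 : φ 0 = 0)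
    (hsl : ∀ x₁ x₂ : ℝ, x₁ ≠ x₂ →
      a ≤ (φ x₁ - φ x₂) / (x₁ - x₂) ∧ (φ x₁ - φ x₂) / (x₁ - x₂) ≤ b)
    (τ : ℝ) (x : ℝ → ℝ) (hx : IsSignal x) :
    ∫ t in Ici (0:ℝ), (x (t + τ) - b⁻¹ * φ (x (t + τ))) * (-a * x t + φ (x t))
      ≤ ∫ t in Ici (0:ℝ), (x t - b⁻¹ * φ (x t)) * (-a * x t + φ (x t)) := by
  have hb : 0 < b := lt_of_le_of_lt ha hab
  set L : ℝ := (b - a)/b with hLdef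
  have hL0 : 0 < L := div_pos (by linarith) hb
  set h : ℝ → ℝ := fun u => u - b⁻¹ * φ u with hdef
  -- slope facts
  have key : ∀ p q : ℝ, p ≤ q → a*(q-p) ≤ φ q - φ p ∧ φ q - φ p ≤ b*(q-p) := by
    intro p q hpq
    rcases eq_or_lt_of_le hpq with rfl | hlt
    · simp
    · have hs := hsl q p (ne_of_gt hlt)
      have hd : 0 < q - p := by linarith
      constructor
      · have := hs.1
        rw [le_div_iff₀ hd] at this; linarith
      · have := hs.2
        rw [div_le_iff₀ hd] at this; linarith
  have hmono : Monotone h := by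
    intro p q hpq
    have h2 := (key p q hpq).2
    have : b⁻¹ * (φ q - φ p) ≤ (q - p) := by
      rw [inv_mul_le_iff₀ hb]; linarith [h2]
    simp only [hdef]; linarith
  have hlip : ∀ p q : ℝ, p ≤ q → b * (h q - h p) ≤ (b - a) * (q - p) := by
    intro p q hpq
    have h1 := (key p q hpq).1
    simp only [hdef]
    have hbb : b * (b⁻¹ * (φ q - φ p)) = φ q - φ p := by
      field_simp
    nlinarith [h1, hbb]
  have hlipW : ∀ p q : ℝ, |h q - h p| ≤ L * |q - p| := by
    intro p q
    rcases le_total p q with hpq | hpq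
    · have h1 := hlip p q hpq
      have h2 : 0 ≤ h q - h p := sub_nonneg.2 (hmono hpq)
      rw [abs_of_nonneg h2, abs_of_nonneg (by linarith : (0:ℝ) ≤ q - p)]
      rw [hLdef, div_mul_eq_mul_div, le_div_iff₀ hb]; nlinarith
    · have h1 := hlip q p hpq
      have h2 : 0 ≤ h p - h q := sub_nonneg.2 (hmono hpq)
      rw [abs_sub_comm, abs_of_nonneg h2, abs_sub_comm, abs_of_nonneg (by linarith : (0:ℝ) ≤ p - q)]
      rw [hLdef, div_mul_eq_mul_div, le_div_iff₀ hb]; nlinarith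
  have hcont : Continuous h := by
    have : LipschitzWith (L.toNNReal) h := by
      apply LipschitzWith.of_dist_le_mul
      intro p q
      rw [Real.dist_eq, Real.dist_eq, Real.coe_toNNReal L hL0.le]
      exact hlipW q p
    exact this.continuous
  have hh0 : h 0 = 0 := by simp [hdef, hφ0]
  have habs : ∀ u, |h u| ≤ L * |u| := by
    intro u
    have := hlipW 0 u
    simpa [hh0] using this
  have hHcont : Continuous (Hof h) :=
    intervalIntegral.continuous_primitive (fun p q => hcont.intervalIntegrable p q) 0
  have hHabs : ∀ w, |Hof h w| ≤ (L * |w|) * |w| := by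
    intro w
    have : ∀ s ∈ Set.uIoc (0:ℝ) w, ‖h s‖ ≤ L * |w| := by
      intro s hs
      have hsle : |s| ≤ |w| := by
        rcases le_total 0 w with hw | hw
        · rw [uIoc_of_le hw] at hs
          rw [abs_of_nonneg hs.1.le, abs_of_nonneg hw]; exact hs.2
        · rw [uIoc_of_ge hw] at hs
          rw [abs_of_nonpos hs.2, abs_of_nonpos hw]
          linarith [hs.1]
      calc ‖h s‖ = |h s| := rfl
        _ ≤ L * |s| := habs s
        _ ≤ L * |w| := by nlinarith [abs_nonneg s]
    have := intervalIntegral.norm_integral_le_of_norm_le_const this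
    simpa [Hof] using this
  -- continuity of N and M
  have hNcont : Continuous (Nof a b h) :=
    (continuous_const.mul ((continuous_id'.mul hcont).sub hHcont)).sub
      (continuous_const.mul (hcont.pow 2))
  have hMcont : Continuous (Mof a b h) :=
    (continuous_const.mul hHcont).sub (continuous_const.mul (hcont.pow 2))
  -- bounds
  set cN : ℝ := 2*(b-a)*L + b/2*L^2 with hcNdef
  have hhsq : ∀ w : ℝ, (h w)^2 ≤ L^2 * w^2 := by
    intro w
    have h1 := mul_self_le_mul_self (abs_nonneg (h w)) (habs w)
    nlinarith [abs_mul_abs_self (h w), abs_mul_abs_self w, abs_nonneg w, hL0.le]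
  have hwh : ∀ w : ℝ, |w * h w| ≤ L * w^2 := by
    intro w
    rw [abs_mul]
    have := mul_le_mul_of_nonneg_left (habs w) (abs_nonneg w)
    nlinarith [abs_mul_abs_self w]
  have habs_sub : ∀ X Y : ℝ, |X - Y| ≤ |X| + |Y| := by
    intro X Y
    rw [sub_eq_add_neg]
    exact (abs_add_le _ _).trans (by rw [abs_neg])
  have hHw : ∀ w : ℝ, |Hof h w| ≤ L * w^2 := by
    intro w
    have := hHabs w
    nlinarith [abs_mul_abs_self w]
  have hNabs : ∀ w : ℝ, |Nof a b h w| ≤ cN * w^2 := by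
    intro w
    have e1 : |Nof a b h w| ≤ (b-a) * |w * h w - Hof h w| + b/2 * (h w)^2 := by
      refine (habs_sub _ _).trans ?_
      rw [abs_mul, abs_mul]
      rw [abs_of_nonneg (by linarith : (0:ℝ) ≤ b - a), abs_of_nonneg (by linarith : (0:ℝ) ≤ b/2),
        abs_of_nonneg (sq_nonneg (h w))]
    have e2 : |w * h w - Hof h w| ≤ 2 * L * w^2 := by
      refine (habs_sub _ _).trans ?_
      have := hwh w; have := hHw w; linarith
    have e3 := hhsq w
    have e4 : (b-a) * |w * h w - Hof h w| ≤ (b-a)*(2*L*w^2) :=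
      mul_le_mul_of_nonneg_left e2 (by linarith)
    have e5 : b/2 * (h w)^2 ≤ b/2 * (L^2*w^2) := mul_le_mul_of_nonneg_left e3 (by linarith)
    calc |Nof a b h w| ≤ (b-a) * (2*L*w^2) + b/2 * (L^2 * w^2) := by linarith
      _ = cN * w^2 := by rw [hcNdef]; ring
  have hMabs : ∀ w : ℝ, |Mof a b h w| ≤ cN * w^2 := by
    intro w
    have e1 : |Mof a b h w| ≤ (b-a) * |Hof h w| + b/2 * (h w)^2 := by
      refine (habs_sub _ _).trans ?_
      rw [abs_mul, abs_mul]
      rw [abs_of_nonneg (by linarith : (0:ℝ) ≤ b - a), abs_of_nonneg (by linarith : (0:ℝ) ≤ b/2),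
        abs_of_nonneg (sq_nonneg (h w))]
    have e2 := hHw w
    have e3 := hhsq w
    have e4 : (b-a) * |Hof h w| ≤ (b-a)*(L*w^2) := mul_le_mul_of_nonneg_left e2 (by linarith)
    have e5 : b/2 * (h w)^2 ≤ b/2 * (L^2*w^2) := mul_le_mul_of_nonneg_left e3 (by linarith)
    calc |Mof a b h w| ≤ (b-a) * (L*w^2) + b/2 * (L^2 * w^2) := by linarith
      _ ≤ cN * w^2 := by
          rw [hcNdef]
          nlinarith [sq_nonneg w, hL0.le]
  set k : ℝ → ℝ := fun v => (b-a)*v - b*h v with hkdef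
  have hkcont : Continuous k := (continuous_const.mul continuous_id').sub (continuous_const.mul hcont)
  set cK : ℝ := (b-a) + b*L with hcKdef
  have hkabs : ∀ v : ℝ, |k v| ≤ cK * |v| := by
    intro v
    refine (habs_sub _ _).trans ?_
    rw [abs_mul, abs_mul, abs_of_nonneg (by linarith : (0:ℝ) ≤ b - a),
      abs_of_nonneg hb.le]
    have := habs v
    nlinarith [abs_nonneg v]
  -- values at 0
  have hH0 : Hof h 0 = 0 := by simp [Hof]
  have hN0 : Nof a b h 0 = 0 := by simp [Nof, hh0, hH0]
  have hM0 : Mof a b h 0 = 0 := by simp [Mof, hh0, hH0]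
  have hpy := pointwise_young' a b ha hab h hcont hmono hh0 hlip
  have hNnn : ∀ u : ℝ, 0 ≤ Nof a b h u := by
    intro u
    have := hpy u 0
    rw [hh0, hM0] at this
    simpa using this
  have hMnn : ∀ v : ℝ, 0 ≤ Mof a b h v := by
    intro v
    have := hpy 0 v
    rw [hh0, hN0] at this
    simpa using this
  -- signal facts
  obtain ⟨hx2, hx0⟩ := hx
  have hxae : AEStronglyMeasurable x volume := hx2.aestronglyMeasurable
  set xs : ℝ → ℝ := fun t => x (t + τ) with hxsdef
  have hxs2 : MemLp xs 2 volume :=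
    hx2.comp_measurePreserving (measurePreserving_add_right volume τ)
  have hxsae : AEStronglyMeasurable xs volume := hxs2.aestronglyMeasurable
  have hxssq : Integrable (fun t => (xs t)^2) volume := hxs2.integrable_sq
  have hxsq : Integrable (fun t => (x t)^2) volume := hx2.integrable_sq
  have hNxs : Integrable (fun t => Nof a b h (xs t)) volume := by
    refine (hxssq.const_mul cN).mono' (hNcont.comp_aestronglyMeasurable hxsae) ?_
    filter_upwards with t
    simpa [Real.norm_eq_abs] using hNabs (xs t)
  have hNx : Integrable (fun t => Nof a b h (x t)) volume := by
    refine (hxsq.const_mul cN).mono' (hNcont.comp_aestronglyMeasurable hxae) ?_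
    filter_upwards with t
    simpa [Real.norm_eq_abs] using hNabs (x t)
  have hMx : Integrable (fun t => Mof a b h (x t)) volume := by
    refine (hxsq.const_mul cN).mono' (hMcont.comp_aestronglyMeasurable hxae) ?_
    filter_upwards with t
    simpa [Real.norm_eq_abs] using hMabs (x t)
  have hprodbnd : ∀ u v : ℝ, |h u * k v| ≤ (L*cK) * (u^2 + v^2) := by
    intro u v
    rw [abs_mul]
    have h1 := habs u
    have h2 := hkabs v
    have hcK0 : 0 ≤ cK := by rw [hcKdef]; nlinarith [hL0.le]
    have h3 : |h u| * |k v| ≤ (L * |u|) * (cK * |v|) :=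
      mul_le_mul h1 h2 (abs_nonneg _) (by positivity)
    have h4 : |u| * |v| ≤ u^2 + v^2 := by
      nlinarith [sq_nonneg (|u| - |v|), sq_abs u, sq_abs v]
    calc |h u| * |k v| ≤ (L * |u|) * (cK * |v|) := h3
      _ = (L*cK) * (|u| * |v|) := by ring
      _ ≤ (L*cK) * (u^2 + v^2) := mul_le_mul_of_nonneg_left h4 (mul_nonneg hL0.le hcK0)
  have hprod : Integrable (fun t => h (xs t) * k (x t)) volume := by
    refine ((hxssq.add hxsq).const_mul (L*cK)).mono'
      ((hcont.comp_aestronglyMeasurable hxsae).mul (hkcont.comp_aestronglyMeasurable hxae)) ?_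
    filter_upwards with t
    simpa [Real.norm_eq_abs, abs_mul] using hprodbnd (xs t) (x t)
  have hprod2 : Integrable (fun t => h (x t) * k (x t)) volume := by
    refine ((hxsq.add hxsq).const_mul (L*cK)).mono'
      ((hcont.comp_aestronglyMeasurable hxae).mul (hkcont.comp_aestronglyMeasurable hxae)) ?_
    filter_upwards with t
    simpa [Real.norm_eq_abs, abs_mul] using hprodbnd (x t) (x t)
  -- identities
  have hk_eq : ∀ v : ℝ, k v = -a*v + φ v := by
    intro v
    simp only [hkdef, hdef]
    field_simp
    ring
  have hNM_eq : ∀ w : ℝ, Nof a b h w + Mof a b h w = h w * k w := by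
    intro w
    simp only [Nof, Mof, Hof, hkdef]
    ring
  -- main chain
  have step0 : ∫ t in Ici (0:ℝ), (x (t + τ) - b⁻¹ * φ (x (t + τ))) * (-a * x t + φ (x t))
      = ∫ t in Ici (0:ℝ), h (xs t) * k (x t) := by
    refine setIntegral_congr_fun measurableSet_Ici fun t _ => ?_
    rw [hk_eq (x t)]
  have step5 : ∫ t in Ici (0:ℝ), (x t - b⁻¹ * φ (x t)) * (-a * x t + φ (x t))
      = ∫ t in Ici (0:ℝ), h (x t) * k (x t) := by
    refine setIntegral_congr_fun measurableSet_Ici fun t _ => ?_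
    rw [hk_eq (x t)]
  have step1 : ∫ t in Ici (0:ℝ), h (xs t) * k (x t)
      ≤ ∫ t in Ici (0:ℝ), (Nof a b h (xs t) + Mof a b h (x t)) := by
    refine setIntegral_mono_on hprod.integrableOn (hNxs.add hMx).integrableOn
      measurableSet_Ici fun t _ => ?_
    have := hpy (xs t) (x t)
    simpa [hkdef] using this
  have step2 : ∫ t in Ici (0:ℝ), (Nof a b h (xs t) + Mof a b h (x t))
      = (∫ t in Ici (0:ℝ), Nof a b h (xs t)) + ∫ t in Ici (0:ℝ), Mof a b h (x t) :=
    integral_add hNxs.integrableOn hMx.integrableOn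
  have step3 : ∫ t in Ici (0:ℝ), Nof a b h (xs t) ≤ ∫ t in Ici (0:ℝ), Nof a b h (x t) := by
    have e : ∫ t in Ici (0:ℝ), Nof a b h (xs t)
        = ∫ s in Ici τ, Nof a b h (x s) := shift_setIntegral (fun s => Nof a b h (x s)) τ
    rw [e]
    refine tail_le _ τ (fun s hs => ?_) (fun s => hNnn (x s)) hNx.integrableOn
    rw [hx0 s hs, hN0]
  have step4 : (∫ t in Ici (0:ℝ), Nof a b h (x t)) + (∫ t in Ici (0:ℝ), Mof a b h (x t))
      = ∫ t in Ici (0:ℝ), h (x t) * k (x t) := by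
    rw [← integral_add hNx.integrableOn hMx.integrableOn]
    exact setIntegral_congr_fun measurableSet_Ici fun t _ => hNM_eq (x t)
  rw [step0, step5]
  calc ∫ t in Ici (0:ℝ), h (xs t) * k (x t)
      ≤ ∫ t in Ici (0:ℝ), (Nof a b h (xs t) + Mof a b h (x t)) := step1
    _ = (∫ t in Ici (0:ℝ), Nof a b h (xs t)) + ∫ t in Ici (0:ℝ), Mof a b h (x t) := step2
    _ ≤ (∫ t in Ici (0:ℝ), Nof a b h (x t)) + ∫ t in Ici (0:ℝ), Mof a b h (x t) := by
        linarith [step3]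
    _ = ∫ t in Ici (0:ℝ), h (x t) * k (x t) := step4

set_option maxHeartbeats 2000000 in
theorem static_slope_ineq_iff_slope_restricted
    (a b : ℝ) (ha : 0 ≤ a) (hab : a < b)
    (φ : ℝ → ℝ) (hφ : Measurable φ) (hφ0 : φ 0 = 0)
    (hbound : ∃ C : ℝ, 0 ≤ C ∧ ∀ u : ℝ, |φ u| ≤ C * |u|) :
    (∀ (τ : ℝ) (x : ℝ → ℝ), IsSignal x →
      ∫ t in Ici (0:ℝ), (x (t + τ) - b⁻¹ * φ (x (t + τ))) * (-a * x t + φ (x t))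
        ≤ ∫ t in Ici (0:ℝ), (x t - b⁻¹ * φ (x t)) * (-a * x t + φ (x t)))
    ↔
    (∀ x₁ x₂ : ℝ, x₁ ≠ x₂ →
      a ≤ (φ x₁ - φ x₂) / (x₁ - x₂) ∧ (φ x₁ - φ x₂) / (x₁ - x₂) ≤ b) := by
  constructor
  · intro hyp x₁ x₂ hne
    exact reverse_dir a b ha hab φ hφ0 hyp x₁ x₂ hne
  · intro hsl τ x hx
    exact forward_dir a b ha hab φ hφ0 hsl τ x hx
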